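/- Fix d∈ℕ and p∈[1,∞). Let f:ℝ^d→ℂ be continuous with ‖f‖_{W^p}<∞, and let X={x_j : j∈J}⊂ℝ^d be a countable set that is separated with constant δ>0. Then (∑_{j∈J}|f(x_j)|^p)^{1/p} ≤ N‖f‖_{W^p}, where N = (√d/δ + 1)^{d/p}. -/

import Mathlib

open MeasureTheory ENNReal

noncomputable section

abbrev Euc (d : ℕ) := EuclideanSpace ℝ (Fin d)

/-- Embedding of `ℤ^d` into `ℝ^d`. -/
def zemb {d : ℕ} (k : Fin d → ℤ) : Euc d := WithLp.toLp 2 (fun i => (k i : ℝ))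

/-- `ess sup_{x ∈ [0,1]^d} |f(x+k)|`, valued in `ℝ≥0∞`. -/
def cubeSup {d : ℕ} (f : Euc d → ℂ) (k : Fin d → ℤ) : ℝ≥0∞ :=
  essSup (fun x => (‖f (x + zemb k)‖₊ : ℝ≥0∞))
    (volume.restrict {x : Euc d | ∀ i, x i ∈ Set.Icc (0:ℝ) 1})

/-- The Wiener amalgam norm `‖f‖_{W^p}`. -/
def WNorm {d : ℕ} (p : ℝ≥0∞) (f : Euc d → ℂ) : ℝ≥0∞ :=
  if p = ∞ then ⨆ k : Fin d → ℤ, cubeSup f k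
  else (∑' k : Fin d → ℤ, cubeSup f k ^ p.toReal) ^ (1 / p.toReal)

/-- Membership in `W₀^1`: continuous with finite `W^1` norm. -/
def MemW01 {d : ℕ} (f : Euc d → ℂ) : Prop := Continuous f ∧ WNorm 1 f < ∞

/-- `(W^1)^{(r)}` norm of a vector of functions. -/
def WNormVec {d r : ℕ} (Φ : Fin r → Euc d → ℂ) : ℝ≥0∞ := ∑ i, WNorm 1 (Φ i)

/-- the `ℓ^p` norm of a family of complex numbers, valued in `ℝ≥0∞`. -/
def lpNorm {ι : Type*} (p : ℝ≥0∞) (c : ι → ℂ) : ℝ≥0∞ :=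
  if p = ∞ then ⨆ j, (‖c j‖₊ : ℝ≥0∞)
  else (∑' j, (‖c j‖₊ : ℝ≥0∞) ^ p.toReal) ^ (1 / p.toReal)

/-- The `(ℓ^p(ℤ^d))^{(r)}` norm `‖C‖ = ∑_i ‖c^i‖_{ℓ^p}`. -/
def vlpNorm {d r : ℕ} (p : ℝ≥0∞) (C : Fin r → (Fin d → ℤ) → ℂ) : ℝ≥0∞ :=
  ∑ i, lpNorm p (C i)

/-- `f_C = ∑_{k ∈ ℤ^d} ∑_i c^i(k) φ^i(· - k)`. -/
def genFun {d r : ℕ} (Φ : Fin r → Euc d → ℂ) (C : Fin r → (Fin d → ℤ) → ℂ)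
    (x : Euc d) : ℂ :=
  ∑' k : Fin d → ℤ, ∑ i, C i k * Φ i (x - zemb k)

/-- Integral of a complex-valued function against a finite complex Borel measure,
via the Jordan decompositions of the real and imaginary parts. -/
def cInt {d : ℕ} (μ : ComplexMeasure (Euc d)) (f : Euc d → ℂ) : ℂ :=
  ((∫ x, f x ∂(ComplexMeasure.re μ).toJordanDecomposition.posPart) -
    (∫ x, f x ∂(ComplexMeasure.re μ).toJordanDecomposition.negPart)) +
  Complex.I * ((∫ x, f x ∂(ComplexMeasure.im μ).toJordanDecomposition.posPart) -
    (∫ x, f x ∂(ComplexMeasure.im μ).toJordanDecomposition.negPart))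

/-- The convolution `(φ ∗ μ)(x) = ∫ φ(x - y) dμ(y)`. -/
def mconv {d : ℕ} (μ : ComplexMeasure (Euc d)) (φ : Euc d → ℂ) (x : Euc d) : ℂ :=
  cInt μ (fun y => φ (x - y))

/-- The total variation norm `|μ|(ℝ^d)` of a finite complex Borel measure, as the
supremum of `∑ ‖μ(S_i)‖` over finite disjoint families of measurable sets. -/
def cmNorm {d : ℕ} (μ : ComplexMeasure (Euc d)) : ℝ≥0∞ :=
  ⨆ (n : ℕ) (S : Fin n → Set (Euc d)) (_ : ∀ i, MeasurableSet (S i))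
    (_ : Pairwise (Function.onFun Disjoint S)), ∑ i, (‖μ (S i)‖₊ : ℝ≥0∞)

/-- norm of a vector of complex measures. -/
def cmNormVec {d t : ℕ} (μ : Fin t → ComplexMeasure (Euc d)) : ℝ≥0∞ :=
  ∑ l, cmNorm (μ l)

/-- The Riesz condition with explicit constants. -/
def RieszWith {d r : ℕ} (p : ℝ≥0∞) (Φ : Fin r → Euc d → ℂ) (m M : ℝ) : Prop :=
  0 < m ∧ m ≤ M ∧ ∀ C : Fin r → (Fin d → ℤ) → ℂ, vlpNorm p C < ∞ →
    ENNReal.ofReal m * vlpNorm p C ≤ eLpNorm (genFun Φ C) p volume ∧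
    eLpNorm (genFun Φ C) p volume ≤ ENNReal.ofReal M * vlpNorm p C

/-- The Riesz (unconditional basis) condition for `p`. -/
def RieszCond {d r : ℕ} (p : ℝ≥0∞) (Φ : Fin r → Euc d → ℂ) : Prop :=
  ∃ m M : ℝ, RieszWith p Φ m M

/-- `X` is a `μ⃗`-sampling set for `V^p(Φ)`. -/
def SamplingSet {d r t : ℕ} {J : Type*} (p : ℝ≥0∞) (Φ : Fin r → Euc d → ℂ)
    (μ : Fin t → ComplexMeasure (Euc d)) (X : J → Euc d) : Prop :=
  ∃ A B : ℝ, 0 < A ∧ A ≤ B ∧ ∀ C : Fin r → (Fin d → ℤ) → ℂ, vlpNorm p C < ∞ →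
    ENNReal.ofReal A * eLpNorm (genFun Φ C) p volume ≤
      ∑ l, lpNorm p (fun j => mconv (μ l) (genFun Φ C) (X j)) ∧
    ∑ l, lpNorm p (fun j => mconv (μ l) (genFun Φ C) (X j)) ≤
      ENNReal.ofReal B * eLpNorm (genFun Φ C) p volume

/-- `X` is separated with constant `δ`. -/
def SeparatedWith {d : ℕ} {J : Type*} (X : J → Euc d) (δ : ℝ) : Prop :=
  ∀ i j : J, i ≠ j → δ ≤ dist (X i) (X j)

def SeparatedSet {d : ℕ} {J : Type*} (X : J → Euc d) : Prop :=
  ∃ δ : ℝ, 0 < δ ∧ SeparatedWith X δ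

/-- Membership in `M_s(ℝ^d)`: `∫ (1+|x|)^s d|μ| < ∞`, expressed via the Jordan
decompositions of the real and imaginary parts. -/
def MemMs {d : ℕ} (s : ℝ) (μ : ComplexMeasure (Euc d)) : Prop :=
  (∫⁻ x, ENNReal.ofReal ((1 + ‖x‖) ^ s) ∂(ComplexMeasure.re μ).toJordanDecomposition.posPart < ∞) ∧
  (∫⁻ x, ENNReal.ofReal ((1 + ‖x‖) ^ s) ∂(ComplexMeasure.re μ).toJordanDecomposition.negPart < ∞) ∧
  (∫⁻ x, ENNReal.ofReal ((1 + ‖x‖) ^ s) ∂(ComplexMeasure.im μ).toJordanDecomposition.posPart < ∞) ∧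
  (∫⁻ x, ENNReal.ofReal ((1 + ‖x‖) ^ s) ∂(ComplexMeasure.im μ).toJordanDecomposition.negPart < ∞)

/-- `Φ ∈ W_s`: an `s`-localized Riesz generator. -/
def MemWs {d r : ℕ} (s : ℝ) (Φ : Fin r → Euc d → ℂ) : Prop :=
  (∀ i, MemW01 (Φ i)) ∧ RieszCond 2 Φ ∧
    ∀ i, ∃ C0 : ℝ, 0 < C0 ∧ ∀ x : Euc d, ‖Φ i x‖ ≤ C0 * (1 + ‖x‖) ^ (-s)

end

section MainProof

open MeasureTheory in
lemma norm_le_cubeSup {d : ℕ} (f : Euc d → ℂ) (hfc : Continuous f)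
    (k : Fin d → ℤ) (y : Euc d) (hy : ∀ i, y i ∈ Set.Icc (0:ℝ) 1) :
    (‖f (y + zemb k)‖₊ : ℝ≥0∞) ≤ cubeSup f k := by
  by_contra hcon
  push_neg at hcon
  set g : Euc d → ℝ≥0∞ := fun x => (‖f (x + zemb k)‖₊ : ℝ≥0∞) with hg
  have hgc : Continuous g :=
    ENNReal.continuous_coe.comp (continuous_nnnorm.comp (hfc.comp (by continuity)))
  set S : Set (Euc d) := {x : Euc d | ∀ i, x i ∈ Set.Icc (0:ℝ) 1} with hS
  set U : Set (Euc d) := {x | cubeSup f k < g x} with hU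
  have hUopen : IsOpen U := isOpen_lt continuous_const hgc
  have hU0 : volume (U ∩ S) = 0 := by
    have hae := ENNReal.ae_le_essSup (μ := volume.restrict S) g
    rw [MeasureTheory.ae_iff] at hae
    have : (volume.restrict S) U = 0 := by
      rw [hU]; simp only [not_le] at hae; exact hae
    rwa [MeasureTheory.Measure.restrict_apply hUopen.measurableSet] at this
  set O : Set (Euc d) := {x : Euc d | ∀ i, x i ∈ Set.Ioo (0:ℝ) 1} with hO
  have hOopen : IsOpen O := by
    have : O = ⋂ i, (fun x : Euc d => x i) ⁻¹' Set.Ioo 0 1 := by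
      ext x; simp [hO, Set.mem_iInter]
    rw [this]
    exact isOpen_iInter_of_finite fun i =>
      isOpen_Ioo.preimage (EuclideanSpace.proj (𝕜 := ℝ) i).continuous
  have hyU : y ∈ U := hcon
  obtain ⟨ε, hε, hball⟩ := Metric.isOpen_iff.mp hUopen y hyU
  set c : Euc d := WithLp.toLp 2 (fun _ => (1/2 : ℝ)) with hc
  set t : ℝ := min (ε / (‖c - y‖ + 1)) (1/2) with htdef
  have hnv : (0:ℝ) < ‖c - y‖ + 1 := by positivity
  have ht0 : 0 < t := lt_min (by positivity) (by norm_num)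
  have ht12 : t ≤ 1/2 := min_le_right _ _
  set z : Euc d := y + t • (c - y) with hz
  have hzO : z ∈ O := by
    intro i
    have hzi : z i = y i + t * (1/2 - y i) := by
      simp [hz, hc, PiLp.add_apply, PiLp.smul_apply, PiLp.sub_apply, smul_eq_mul]
    obtain ⟨h0, h1⟩ := hy i
    constructor
    · rw [hzi]; nlinarith
    · rw [hzi]; nlinarith
  have hzU : z ∈ U := by
    apply hball
    rw [Metric.mem_ball, dist_eq_norm, hz, add_sub_cancel_left, norm_smul,
      Real.norm_eq_abs, abs_of_pos ht0]
    calc t * ‖c - y‖ ≤ ε / (‖c - y‖ + 1) * ‖c - y‖ :=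
          mul_le_mul_of_nonneg_right (min_le_left _ _) (norm_nonneg _)
      _ < ε := by
          rw [div_mul_eq_mul_div, div_lt_iff₀ hnv]
          nlinarith [norm_nonneg (c - y)]
  have hpos : 0 < volume (U ∩ O) :=
    (hUopen.inter hOopen).measure_pos volume ⟨z, hzU, hzO⟩
  have hle : volume (U ∩ O) ≤ volume (U ∩ S) :=
    measure_mono (Set.inter_subset_inter_right _ (fun x hx i => Set.Ioo_subset_Icc_self (hx i)))
  rw [hU0] at hle
  exact absurd (le_antisymm hle zero_le) (ne_of_gt hpos)

end MainProof

open MeasureTheory ENNReal in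
/-- inequality (4.2.5): sampling a continuous `W^p` function on a
separated set: `‖f(X)‖_{ℓ^p} ≤ N ‖f‖_{W^p}` with `N = (√d/δ + 1)^{d/p}`. -/
theorem sample_lp_bound
    (d : ℕ) (p : ℝ≥0∞) (hp : 1 ≤ p) (hp' : p ≠ ∞)
    (f : Euc d → ℂ) (hfc : Continuous f) (hfW : WNorm p f < ∞)
    (J : Type) [Countable J] (X : J → Euc d) (δ : ℝ) (hδ : 0 < δ)
    (hsep : SeparatedWith X δ) :
    lpNorm p (fun j => f (X j)) ≤
      ENNReal.ofReal ((Real.sqrt d / δ + 1) ^ ((d : ℝ) / p.toReal)) * WNorm p f := by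
  have hp0 : p ≠ 0 := by
    intro h; rw [h] at hp; simp at hp
  have hpt : 0 < p.toReal := ENNReal.toReal_pos hp0 hp'
  set pt := p.toReal with hptdef
  set n : ℕ := max 1 ⌈Real.sqrt d / δ⌉₊ with hn
  have hn1 : 1 ≤ n := le_max_left _ _
  have hn0 : (0:ℝ) < n := by exact_mod_cast hn1
  have h0 : 0 ≤ Real.sqrt d / δ := div_nonneg (Real.sqrt_nonneg _) hδ.le
  have hnge : Real.sqrt d / δ ≤ n := by
    refine le_trans (Nat.le_ceil _) ?_
    exact_mod_cast le_max_right 1 ⌈Real.sqrt d / δ⌉₊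
  have hnle : (n : ℝ) ≤ Real.sqrt d / δ + 1 := by
    rw [hn]
    push_cast [Nat.cast_max]
    apply max_le
    · linarith
    · exact (Nat.ceil_lt_add_one h0).le
  -- key separation/injectivity fact
  have key : ∀ j₁ j₂ : J, (∀ i, ⌊X j₁ i⌋ = ⌊X j₂ i⌋) →
      (∀ i, ⌊(n:ℝ) * Int.fract (X j₁ i)⌋₊ = ⌊(n:ℝ) * Int.fract (X j₂ i)⌋₊) → j₁ = j₂ := by
    intro j₁ j₂ hfl hsc
    by_contra hne
    have hd := hsep j₁ j₂ hne
    have hcoord : ∀ i, |X j₁ i - X j₂ i| < 1 / n := by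
      intro i
      have e1 : X j₁ i - X j₂ i = Int.fract (X j₁ i) - Int.fract (X j₂ i) := by
        rw [Int.fract, Int.fract, hfl i]; ring
      rw [e1]
      have h1 : (0:ℝ) ≤ (n:ℝ) * Int.fract (X j₁ i) := mul_nonneg hn0.le (Int.fract_nonneg _)
      have h2 : (0:ℝ) ≤ (n:ℝ) * Int.fract (X j₂ i) := mul_nonneg hn0.le (Int.fract_nonneg _)
      have l1 := Nat.floor_le h1
      have l2 := Nat.floor_le h2
      have u1 := Nat.lt_floor_add_one ((n:ℝ) * Int.fract (X j₁ i))
      have u2 := Nat.lt_floor_add_one ((n:ℝ) * Int.fract (X j₂ i))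
      rw [hsc i] at l1 u1
      have hinv : (n:ℝ) * (1/n) = 1 := by field_simp
      rw [abs_lt]
      constructor
      · nlinarith
      · nlinarith
    rcases Nat.eq_zero_or_pos d with hd0 | hdpos
    · have hXeq : X j₁ = X j₂ := by
        ext i
        exact absurd i.isLt (by omega)
      rw [hXeq, dist_self] at hd
      linarith
    · have hlt : dist (X j₁) (X j₂) < δ := by
        rw [EuclideanSpace.dist_eq]
        have hsum : ∑ i, dist (X j₁ i) (X j₂ i) ^ 2 < ∑ _i : Fin d, (1/(n:ℝ))^2 := by
          apply Finset.sum_lt_sum_of_nonempty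
          · exact Finset.univ_nonempty_iff.mpr (Fin.pos_iff_nonempty.mp hdpos)
          · intro i _
            rw [Real.dist_eq]
            have := hcoord i
            nlinarith [abs_nonneg (X j₁ i - X j₂ i)]
        calc Real.sqrt (∑ i, dist (X j₁ i) (X j₂ i) ^ 2)
            < Real.sqrt (∑ _i : Fin d, (1/(n:ℝ))^2) :=
              Real.sqrt_lt_sqrt (Finset.sum_nonneg fun i _ => sq_nonneg _) hsum
          _ = Real.sqrt d * (1/n) := by
              rw [Finset.sum_const, Finset.card_univ, Fintype.card_fin, nsmul_eq_mul,
                Real.sqrt_mul (by positivity), Real.sqrt_sq (by positivity)]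
          _ ≤ δ := by
              rw [mul_one_div, div_le_iff₀ hn0]
              nlinarith [(div_le_iff₀ hδ).mp hnge]
      linarith
  -- floor-of-scaled-fract lands in Fin n
  have hfloorlt : ∀ (j : J) (i : Fin d), ⌊(n:ℝ) * Int.fract (X j i)⌋₊ < n := by
    intro j i
    rw [Nat.floor_lt (mul_nonneg hn0.le (Int.fract_nonneg _))]
    calc (n:ℝ) * Int.fract (X j i) < (n:ℝ) * 1 :=
          mul_lt_mul_of_pos_left (Int.fract_lt_one _) hn0
      _ = n := mul_one _
  rw [_root_.lpNorm, if_neg hp', WNorm, if_neg hp']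
  set T : ℝ≥0∞ := ∑' k : Fin d → ℤ, cubeSup f k ^ pt with hT
  set K : J → (Fin d → ℤ) := fun j i => ⌊X j i⌋ with hK
  have hstep : ∑' j, (‖f (X j)‖₊ : ℝ≥0∞) ^ pt ≤ ((n ^ d : ℕ) : ℝ≥0∞) * T := by
    rw [← tsum_fiberwise (fun j => (‖f (X j)‖₊ : ℝ≥0∞) ^ pt) K]
    calc ∑' k, ∑' j : K ⁻¹' {k}, (‖f (X (j:J))‖₊ : ℝ≥0∞) ^ pt
        ≤ ∑' k : Fin d → ℤ, ((n^d : ℕ) : ℝ≥0∞) * cubeSup f k ^ pt := by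
          apply ENNReal.tsum_le_tsum
          intro k
          have hptw : ∀ j : K ⁻¹' {k}, (‖f (X (j:J))‖₊ : ℝ≥0∞) ^ pt ≤ cubeSup f k ^ pt := by
            intro j
            apply ENNReal.rpow_le_rpow _ hpt.le
            have hkj : K (j:J) = k := j.2
            have hcoords : ∀ i, (X (j:J) - zemb k) i ∈ Set.Icc (0:ℝ) 1 := by
              intro i
              have hki : (k i : ℝ) = (⌊X (j:J) i⌋ : ℝ) := by
                exact_mod_cast congrFun hkj.symm i
              have happ : (X (j:J) - zemb k) i = X (j:J) i - (k i : ℝ) := by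
                simp [zemb, PiLp.sub_apply]
              rw [happ, hki]
              constructor
              · linarith [Int.floor_le (X (j:J) i)]
              · linarith [Int.lt_floor_add_one (X (j:J) i)]
            have := norm_le_cubeSup f hfc k (X (j:J) - zemb k) hcoords
            simpa using this
          set σ : K ⁻¹' {k} → (Fin d → Fin n) :=
            fun j i => ⟨⌊(n:ℝ) * Int.fract (X (j:J) i)⌋₊, hfloorlt _ _⟩ with hσ
          have hσinj : Function.Injective σ := by
            intro a b hab
            apply Subtype.ext
            apply key
            · intro i
              have ha : K (a:J) = k := a.2
              have hb : K (b:J) = k := b.2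
              exact congrFun (ha.trans hb.symm) i
            · intro i
              have := congrFun hab i
              exact congrArg Fin.val this
          calc ∑' j : K ⁻¹' {k}, (‖f (X (j:J))‖₊ : ℝ≥0∞) ^ pt
              ≤ ∑' _v : Fin d → Fin n, cubeSup f k ^ pt :=
                ENNReal.summable.tsum_le_tsum_of_inj σ hσinj (fun _ _ => zero_le) (fun j => hptw j)
                  ENNReal.summable
            _ = ((n^d : ℕ) : ℝ≥0∞) * cubeSup f k ^ pt := by
                rw [tsum_fintype, Finset.sum_const, Finset.card_univ, nsmul_eq_mul]
                congr 1
                simp [Fintype.card_fun]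
      _ = ((n^d : ℕ) : ℝ≥0∞) * T := ENNReal.tsum_mul_left
  have h2 : (∑' j, (‖f (X j)‖₊ : ℝ≥0∞) ^ pt) ^ (1/pt)
      ≤ ((n^d : ℕ) : ℝ≥0∞) ^ (1/pt) * T ^ (1/pt) := by
    rw [← ENNReal.mul_rpow_of_nonneg _ _ (by positivity)]
    exact ENNReal.rpow_le_rpow hstep (by positivity)
  refine le_trans h2 (mul_le_mul_left ?_ _)
  have hcast : ((n^d : ℕ) : ℝ≥0∞) = ENNReal.ofReal ((n:ℝ)^d) := by
    rw [← ENNReal.ofReal_natCast]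
    norm_num
  rw [hcast, ENNReal.ofReal_rpow_of_pos (by positivity)]
  apply ENNReal.ofReal_le_ofReal
  have hrw : ((n:ℝ)^d) ^ (1/pt) = (n:ℝ) ^ ((d:ℝ) / pt) := by
    rw [← Real.rpow_natCast (n:ℝ) d, ← Real.rpow_mul hn0.le, mul_one_div]
  rw [hrw]
  exact Real.rpow_le_rpow hn0.le hnle (by positivity)
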